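/- arXiv:2409.20183 — 2 statements merged into one kernel-verified Lean document; each statement's English description precedes it below -/
import Mathlib

section
/- Let G be a finite simple graph, r a positive integer, and S_1, S_2 multisets of vertices such that G ⋆^r S_1 and G ⋆^r S_2 are both valid and the multiset S_1 ⊔ S_2 (pointwise sum of multiplicities) is independent in G. Then S_1 ⊔ S_2 is r-incident in G, S_2 is r-incident in G ⋆^r S_1, and G ⋆^r (S_1 ⊔ S_2) = (G ⋆^r S_1) ⋆^r S_2. -/
open Classical Real Matrix

noncomputable section

variable {V : Type} [Fintype V] [DecidableEq V]

/-- The number of edges of `G` with both endpoints in `A`. -/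
def edgeCount (G : SimpleGraph V) (A : Finset V) : ℕ :=
  (Finset.univ.filter (fun p : V × V => G.Adj p.1 p.2 ∧ p.1 ∈ A ∧ p.2 ∈ A)).card / 2

/-- The graph state `|G⟩`, as a vector in `ℂ^(V → {0,1})`. -/
def graphState (G : SimpleGraph V) : (V → Bool) → ℂ :=
  fun x => (-1 : ℂ) ^ edgeCount G (Finset.univ.filter (fun v => x v = true)) /
    (Real.sqrt (2 ^ Fintype.card V) : ℂ)

/-- The odd neighbourhood `Odd_G(D)` of a set `D` of vertices. -/
def oddNbhd (G : SimpleGraph V) (D : Finset V) : Finset V :=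
  Finset.univ.filter (fun v => Odd ((D.filter (fun u => G.Adj v u)).card))

/-- The operator `X_A` flipping the coordinates in `A`. -/
def Xop (A : Finset V) (ψ : (V → Bool) → ℂ) : (V → Bool) → ℂ :=
  fun x => ψ (fun v => if v ∈ A then !(x v) else x v)

/-- The operator `Z_A`. -/
def Zop (A : Finset V) (ψ : (V → Bool) → ℂ) : (V → Bool) → ℂ :=
  fun x => (-1 : ℂ) ^ ((A.filter (fun v => x v = true)).card) * ψ x

/-- The Pauli operator `𝒫_D^G = (−1)^{|G[D]|} X_D Z_{Odd_G(D)}`. -/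
def pauliP (G : SimpleGraph V) (D : Finset V) (ψ : (V → Bool) → ℂ) : (V → Bool) → ℂ :=
  fun x => (-1 : ℂ) ^ edgeCount G D * Xop D (Zop (oddNbhd G D) ψ) x

/-- Index of a Bool in `Fin 2`. -/
def boolIdx (b : Bool) : Fin 2 := if b then 1 else 0

/-- Action of a local (tensor-product) operator `⊗_u U_u` on the state space. -/
def applyLocal (U : V → Matrix (Fin 2) (Fin 2) ℂ) (ψ : (V → Bool) → ℂ) : (V → Bool) → ℂ :=
  fun x => ∑ y : V → Bool, (∏ u, U u (boolIdx (x u)) (boolIdx (y u))) * ψ y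

/-- A local unitary: each single-qubit factor is unitary. -/
def IsLocalUnitary (U : V → Matrix (Fin 2) (Fin 2) ℂ) : Prop :=
  ∀ u, U u ∈ Matrix.unitaryGroup (Fin 2) ℂ

def Xgate : Matrix (Fin 2) (Fin 2) ℂ := !![0, 1; 1, 0]

def Zgate : Matrix (Fin 2) (Fin 2) ℂ := !![1, 0; 0, -1]

def Ygate : Matrix (Fin 2) (Fin 2) ℂ := Complex.I • (Xgate * Zgate)

def Hgate : Matrix (Fin 2) (Fin 2) ℂ := (1 / (Real.sqrt 2 : ℂ)) • !![1, 1; 1, -1]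

/-- The rotation `Z(α) = diag(1, e^{iα})`. -/
def Zrot (α : ℝ) : Matrix (Fin 2) (Fin 2) ℂ := !![1, 0; 0, Complex.exp (Complex.I * (α : ℂ))]

/-- The rotation `X(α) = H Z(α) H`. -/
def Xrot (α : ℝ) : Matrix (Fin 2) (Fin 2) ℂ := Hgate * Zrot α * Hgate

/-- A 2×2 matrix is in the Pauli group. -/
def IsPauliGate (M : Matrix (Fin 2) (Fin 2) ℂ) : Prop :=
  ∃ z ∈ ({1, -1, Complex.I, -Complex.I} : Set ℂ),
    ∃ P ∈ ({1, Xgate, Ygate, Zgate} : Set (Matrix (Fin 2) (Fin 2) ℂ)), M = z • P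

/-- A 2×2 unitary is Clifford if it maps `X` and `Z` to the Pauli group under conjugation. -/
def IsCliffordGate (C : Matrix (Fin 2) (Fin 2) ℂ) : Prop :=
  C ∈ Matrix.unitaryGroup (Fin 2) ℂ ∧ IsPauliGate (C * Xgate * Cᴴ) ∧ IsPauliGate (C * Zgate * Cᴴ)

/-- The subgroup `LC_r` of 2×2 unitaries generated by `H` and `Z(π/2^r)`. -/
inductive InLCr (r : ℕ) : Matrix (Fin 2) (Fin 2) ℂ → Prop
  | H : InLCr r Hgate
  | Z : InLCr r (Zrot (π / 2 ^ r))
  | one : InLCr r 1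
  | mul {A B : Matrix (Fin 2) (Fin 2) ℂ} : InLCr r A → InLCr r B → InLCr r (A * B)
  | inv {A : Matrix (Fin 2) (Fin 2) ℂ} : InLCr r A → InLCr r A⁻¹

/-- Two states are LU-equivalent when some local unitary maps one to the other. -/
def LUequiv (ψ φ : (V → Bool) → ℂ) : Prop :=
  ∃ U : V → Matrix (Fin 2) (Fin 2) ℂ, IsLocalUnitary U ∧ φ = applyLocal U ψ

/-- Two states are `LC_r`-equivalent when some local unitary with all factors in `LC_r`
maps one to the other. -/
def LCrEquiv (r : ℕ) (ψ φ : (V → Bool) → ℂ) : Prop :=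
  ∃ U : V → Matrix (Fin 2) (Fin 2) ℂ, (∀ u, InLCr r (U u)) ∧ φ = applyLocal U ψ

/-- Local complementation of `G` at a vertex `u`: `v ∼ w` iff `(v ∼_G w) XOR (v, w ∈ N_G(u))`. -/
def localComp (G : SimpleGraph V) (u : V) : SimpleGraph V where
  Adj v w := v ≠ w ∧ ¬ (G.Adj v w ↔ G.Adj u v ∧ G.Adj u w)
  symm := ⟨by
    intro v w h
    obtain ⟨h1, h2⟩ := h
    refine ⟨h1.symm, fun h => h2 ?_⟩
    rw [G.adj_comm w v] at h
    tauto⟩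
  loopless := ⟨fun v h => h.1 rfl⟩

/-- Local equivalence: related by a sequence of local complementations. -/
def LocalEquiv : SimpleGraph V → SimpleGraph V → Prop :=
  Relation.ReflTransGen (fun G G' => ∃ u, G' = localComp G u)

/-- The local Clifford operator `L_u^G = X_u(π/2) ⊗_{v ∈ N_G(u)} Z_v(−π/2)`
implementing the local complementation at `u`. -/
def Lmat (G : SimpleGraph V) (u : V) : V → Matrix (Fin 2) (Fin 2) ℂ :=
  fun v => if v = u then Xrot (π / 2) else if G.Adj u v then Zrot (-(π / 2)) else 1

/-- The local Clifford operator implementing a sequence of local complementations: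
`lcSeqOp G [a₁, …, a_m] = L_{a_m}^{G^{(m−1)}} ⋯ L_{a_1}^{G^{(0)}}` (pointwise products). -/
def lcSeqOp : SimpleGraph V → List V → V → Matrix (Fin 2) (Fin 2) ℂ
  | _, [] => fun _ => 1
  | G, a :: l => fun v => lcSeqOp (localComp G a) l v * Lmat G a v

/-- The support of a multiset of vertices. -/
def msSupp (S : V → ℕ) : Finset V := Finset.univ.filter (fun u => 0 < S u)

/-- A multiset of vertices is independent in `G` when its support is an independent set. -/
def MsIndep (G : SimpleGraph V) (S : V → ℕ) : Prop :=
  ∀ u v, 0 < S u → 0 < S v → ¬ G.Adj u v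

/-- `S • A = Σ_{u ∈ A} S(u)`. -/
def msDot (S : V → ℕ) (A : Finset V) : ℕ := ∑ u ∈ A, S u

/-- The common neighbourhood `Λ_G^K = ⋂_{u ∈ K} N_G(u)`. -/
def commonNbhd (G : SimpleGraph V) (K : Finset V) : Finset V :=
  Finset.univ.filter (fun v => ∀ u ∈ K, G.Adj u v)

/-- The Kronecker delta `δ(0) = 1`, `δ(k) = 0` for `k > 0`. -/
def kdelta (k : ℕ) : ℕ := if k = 0 then 1 else 0

/-- `S` is `r`-incident in `G`. -/
def RIncident (G : SimpleGraph V) (r : ℕ) (S : V → ℕ) : Prop :=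
  ∀ k < r, ∀ K : Finset V, (∀ u ∈ K, u ∉ msSupp S) → K.card = k + 2 →
    2 ^ (r - k - kdelta k) ∣ msDot S (commonNbhd G K)

/-- The `r`-local complementation `G ⋆^r S`. -/
def rLocalComp (G : SimpleGraph V) (r : ℕ) (S : V → ℕ) : SimpleGraph V where
  Adj u v := u ≠ v ∧
    ¬ (G.Adj u v ↔ msDot S (commonNbhd G {u, v}) ≡ 2 ^ (r - 1) [MOD 2 ^ r])
  symm := ⟨by
    intro u v h
    obtain ⟨h1, h2⟩ := h
    refine ⟨h1.symm, fun h => h2 ?_⟩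
    rw [G.adj_comm v u, Finset.pair_comm v u] at h
    exact h⟩
  loopless := ⟨fun u h => h.1 rfl⟩

/-- `G ⋆^r S` is valid when `S` is independent and `r`-incident. -/
def ValidRLC (G : SimpleGraph V) (r : ℕ) (S : V → ℕ) : Prop :=
  MsIndep G S ∧ RIncident G r S

/-- `r`-local equivalence: related by a sequence of valid `r`-local complementations. -/
def RLocalEquiv (r : ℕ) : SimpleGraph V → SimpleGraph V → Prop :=
  Relation.ReflTransGen (fun G G' => ∃ S : V → ℕ, ValidRLC G r S ∧ G' = rLocalComp G r S)

/-- A local set of `G`: a nonempty set of the form `D ∪ Odd_G(D)`. -/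
def IsLocalSet (G : SimpleGraph V) (L : Finset V) : Prop :=
  L.Nonempty ∧ ∃ D : Finset V, L = D ∪ oddNbhd G D

/-- A minimal local set of `G`. -/
def IsMLS (G : SimpleGraph V) (L : Finset V) : Prop :=
  IsLocalSet G L ∧ ∀ L' : Finset V, IsLocalSet G L' → L' ⊆ L → L' = L

/-- A vertex has type X in `G`. -/
def HasTypeX (G : SimpleGraph V) (u : V) : Prop :=
  (∃ L, IsMLS G L ∧ u ∈ L) ∧
  ∀ L D : Finset V, IsMLS G L → u ∈ L → L = D ∪ oddNbhd G D → u ∈ D ∧ u ∉ oddNbhd G D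

/-- A vertex has type Y in `G`. -/
def HasTypeY (G : SimpleGraph V) (u : V) : Prop :=
  (∃ L, IsMLS G L ∧ u ∈ L) ∧
  ∀ L D : Finset V, IsMLS G L → u ∈ L → L = D ∪ oddNbhd G D → u ∈ D ∧ u ∈ oddNbhd G D

/-- A vertex has type Z in `G`. -/
def HasTypeZ (G : SimpleGraph V) (u : V) : Prop :=
  (∃ L, IsMLS G L ∧ u ∈ L) ∧
  ∀ L D : Finset V, IsMLS G L → u ∈ L → L = D ∪ oddNbhd G D → u ∉ D ∧ u ∈ oddNbhd G D

/-- A vertex has type ⊥ in `G`. -/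
def HasTypeBot (G : SimpleGraph V) (u : V) : Prop :=
  ¬ HasTypeX G u ∧ ¬ HasTypeY G u ∧ ¬ HasTypeZ G u

/-- A graph on a linearly ordered vertex set is in standard form. -/
def StandardForm {W : Type} [Fintype W] [LinearOrder W] (G : SimpleGraph W) : Prop :=
  (∀ u, ¬ HasTypeY G u) ∧
  ∀ u, HasTypeX G u → ∀ v, G.Adj u v → HasTypeZ G v ∧ u < v

/-- The `k`-subsets of `[1, t]`. -/
abbrev KSubsets (t k : ℕ) := {A : Finset (Fin t) // A.card = k}

/-- The vertex set of the graphs `C_{t,k}` and `C'_{t,k}`. -/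
abbrev CtkVertex (t k : ℕ) := Fin t ⊕ KSubsets t k

/-- The bipartite graph `C_{t,k}`: `u ∈ [1,t]` is adjacent to a `k`-subset `A` iff `u ∈ A`. -/
def Ctk (t k : ℕ) : SimpleGraph (CtkVertex t k) :=
  SimpleGraph.fromRel (fun x y =>
    ∃ (u : Fin t) (A : KSubsets t k), x = Sum.inl u ∧ y = Sum.inr A ∧ u ∈ A.1)

/-- The graph `C'_{t,k}`: `C_{t,k}` together with all edges between distinct elements of `[1,t]`. -/
def Ctk' (t k : ℕ) : SimpleGraph (CtkVertex t k) :=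
  SimpleGraph.fromRel (fun x y =>
    (∃ (u : Fin t) (A : KSubsets t k), x = Sum.inl u ∧ y = Sum.inr A ∧ u ∈ A.1) ∨
    (∃ u v : Fin t, x = Sum.inl u ∧ y = Sum.inl v))

end

section Aux

variable {V : Type} [Fintype V] [DecidableEq V]

lemma aux_msdot_add (S₁ S₂ : V → ℕ) (A : Finset V) :
    msDot (fun u => S₁ u + S₂ u) A = msDot S₁ A + msDot S₂ A :=
  Finset.sum_add_distrib

lemma aux_msdot_zero {G : SimpleGraph V} {S : V → ℕ} {x : V} {K : Finset V}
    (hx : x ∈ K) (h : ∀ w, 0 < S w → ¬ G.Adj x w) :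
    msDot S (commonNbhd G K) = 0 := by
  unfold msDot commonNbhd
  apply Finset.sum_eq_zero
  intro w hw
  simp only [Finset.mem_filter] at hw
  by_contra hne
  exact h w (Nat.pos_of_ne_zero hne) (hw.2 x hx)

lemma aux_not_zero_modeq {r : ℕ} (hr : 0 < r) :
    ¬ ((0 : ℕ) ≡ 2 ^ (r - 1) [MOD 2 ^ r]) := by
  intro h
  have hlt : (2:ℕ) ^ (r-1) < 2 ^ r := by
    apply Nat.pow_lt_pow_right (by norm_num); omega
  have h0 : (0:ℕ) % 2 ^ r = 0 := Nat.zero_mod _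
  have h1 : (2:ℕ) ^ (r-1) % 2 ^ r = 2 ^ (r-1) := Nat.mod_eq_of_lt hlt
  have hpos : 0 < (2:ℕ) ^ (r-1) := Nat.pow_pos (by norm_num)
  unfold Nat.ModEq at h
  omega

lemma aux_half_modeq_iff {r : ℕ} (hr : 0 < r) (a : ℕ) :
    (2 ^ (r-1) * a ≡ 2 ^ (r-1) [MOD 2 ^ r]) ↔ a % 2 = 1 := by
  have hrr : (2:ℕ) ^ r = 2 ^ (r-1) * 2 := by
    conv_lhs => rw [show r = (r-1) + 1 by omega]
    rw [pow_succ]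
  have hpos : 0 < (2:ℕ) ^ (r-1) := Nat.pow_pos (by norm_num)
  have hlt : (2:ℕ) ^ (r-1) < 2 ^ r := by
    apply Nat.pow_lt_pow_right (by norm_num); omega
  unfold Nat.ModEq
  rw [hrr, Nat.mul_mod_mul_left, ← hrr, Nat.mod_eq_of_lt hlt]
  constructor
  · intro h
    have h2 : a % 2 < 2 := Nat.mod_lt _ (by norm_num)
    nlinarith [Nat.mul_le_mul_left (2 ^ (r-1)) (show a % 2 ≤ 1 by omega)]
  · intro h; rw [h, mul_one]

lemma aux_key_mod {r s₁ s₂ : ℕ} (hr : 0 < r) (h1 : 2 ^ (r-1) ∣ s₁) (h2 : 2 ^ (r-1) ∣ s₂) :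
    ((s₁ + s₂ ≡ 2 ^ (r-1) [MOD 2 ^ r]) ↔
      ¬ ((s₁ ≡ 2 ^ (r-1) [MOD 2 ^ r]) ↔ (s₂ ≡ 2 ^ (r-1) [MOD 2 ^ r]))) := by
  obtain ⟨a, rfl⟩ := h1
  obtain ⟨b, rfl⟩ := h2
  rw [← Nat.mul_add, aux_half_modeq_iff hr, aux_half_modeq_iff hr, aux_half_modeq_iff hr]
  omega

lemma aux_logic (N A P1 P2 : Prop) (hN : N) :
    ((N ∧ ¬(A ↔ ¬(P1 ↔ P2))) ↔ (N ∧ ¬((N ∧ ¬(A ↔ P1)) ↔ P2))) := by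
  constructor
  · rintro ⟨-, h⟩
    exact ⟨hN, by tauto⟩
  · rintro ⟨-, h⟩
    exact ⟨hN, by tauto⟩

/-- Edges incident to the support of `S₂` are unchanged by `⋆^r S₁`. -/
lemma aux_adj_supp {G : SimpleGraph V} {r : ℕ} (hr : 0 < r) {S₁ S₂ : V → ℕ}
    (hindep : MsIndep G (fun u => S₁ u + S₂ u)) {v : V} (hv : 0 < S₂ v) (x : V) :
    (rLocalComp G r S₁).Adj x v ↔ G.Adj x v := by
  have hz : msDot S₁ (commonNbhd G {x, v}) = 0 := by
    apply aux_msdot_zero (x := v) (by simp)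
    intro w hw
    have := hindep v w
    simp only [] at this
    exact this (by omega) (by omega)
  have hAdj : (rLocalComp G r S₁).Adj x v ↔
      x ≠ v ∧ ¬ (G.Adj x v ↔ msDot S₁ (commonNbhd G {x, v}) ≡ 2 ^ (r-1) [MOD 2 ^ r]) :=
    Iff.rfl
  rw [hAdj, hz]
  have := aux_not_zero_modeq hr
  constructor
  · tauto
  · intro h; exact ⟨G.ne_of_adj h, by tauto⟩

lemma aux_msdot_commonNbhd_eq {G : SimpleGraph V} {r : ℕ} (hr : 0 < r) {S₁ S₂ : V → ℕ}
    (hindep : MsIndep G (fun u => S₁ u + S₂ u)) (K : Finset V) :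
    msDot S₂ (commonNbhd (rLocalComp G r S₁) K) = msDot S₂ (commonNbhd G K) := by
  unfold msDot commonNbhd
  rw [Finset.sum_filter, Finset.sum_filter]
  apply Finset.sum_congr rfl
  intro w _
  rcases Nat.eq_zero_or_pos (S₂ w) with h | h
  · simp [h]
  · have heq : ∀ x, (rLocalComp G r S₁).Adj x w ↔ G.Adj x w :=
      fun x => aux_adj_supp hr hindep h x
    simp only [heq]

end Aux

set_option maxHeartbeats 1000000 in
theorem stmt_4 {V : Type} [Fintype V] [DecidableEq V] (G : SimpleGraph V) (r : ℕ) (hr : 0 < r)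
    (S₁ S₂ : V → ℕ) (h₁ : ValidRLC G r S₁) (h₂ : ValidRLC G r S₂)
    (hindep : MsIndep G (fun u => S₁ u + S₂ u)) :
    RIncident G r (fun u => S₁ u + S₂ u) ∧
    RIncident (rLocalComp G r S₁) r S₂ ∧
    rLocalComp G r (fun u => S₁ u + S₂ u) = rLocalComp (rLocalComp G r S₁) r S₂ := by
  obtain ⟨hi₁, hr₁⟩ := h₁
  obtain ⟨hi₂, hr₂⟩ := h₂
  have hsupp : ∀ (S : V → ℕ) (u : V), u ∈ msSupp S ↔ 0 < S u := by
    intro S u; simp [msSupp]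
  -- Claim A
  have hA : RIncident G r (fun u => S₁ u + S₂ u) := by
    intro k hk K hK hcard
    rw [aux_msdot_add]
    have hK1 : ∀ u ∈ K, u ∉ msSupp S₁ := by
      intro u hu
      have := hK u hu
      rw [hsupp] at this ⊢
      omega
    have hK2 : ∀ u ∈ K, u ∉ msSupp S₂ := by
      intro u hu
      have := hK u hu
      rw [hsupp] at this ⊢
      omega
    exact dvd_add (hr₁ k hk K hK1 hcard) (hr₂ k hk K hK2 hcard)
  refine ⟨hA, ?_, ?_⟩
  · -- Claim B
    intro k hk K hK hcard
    rw [aux_msdot_commonNbhd_eq hr hindep]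
    exact hr₂ k hk K hK hcard
  · -- Claim C
    ext u v
    by_cases hne : u = v
    · subst hne
      exact ⟨fun h => absurd rfl h.1, fun h => absurd rfl h.1⟩
    have hL : (rLocalComp G r (fun u => S₁ u + S₂ u)).Adj u v ↔
        u ≠ v ∧ ¬ (G.Adj u v ↔
          msDot S₁ (commonNbhd G {u, v}) + msDot S₂ (commonNbhd G {u, v})
            ≡ 2 ^ (r-1) [MOD 2 ^ r]) := by
      rw [show (rLocalComp G r (fun u => S₁ u + S₂ u)).Adj u v ↔ (u ≠ v ∧
        ¬ (G.Adj u v ↔ msDot (fun u => S₁ u + S₂ u) (commonNbhd G {u, v})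
          ≡ 2 ^ (r-1) [MOD 2 ^ r])) from Iff.rfl, aux_msdot_add]
    have hR : (rLocalComp (rLocalComp G r S₁) r S₂).Adj u v ↔
        u ≠ v ∧ ¬ ((rLocalComp G r S₁).Adj u v ↔
          msDot S₂ (commonNbhd G {u, v}) ≡ 2 ^ (r-1) [MOD 2 ^ r]) := by
      rw [show (rLocalComp (rLocalComp G r S₁) r S₂).Adj u v ↔ (u ≠ v ∧
        ¬ ((rLocalComp G r S₁).Adj u v ↔
          msDot S₂ (commonNbhd (rLocalComp G r S₁) {u, v})
            ≡ 2 ^ (r-1) [MOD 2 ^ r])) from Iff.rfl,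
        aux_msdot_commonNbhd_eq hr hindep]
    have hMid : (rLocalComp G r S₁).Adj u v ↔
        u ≠ v ∧ ¬ (G.Adj u v ↔
          msDot S₁ (commonNbhd G {u, v}) ≡ 2 ^ (r-1) [MOD 2 ^ r]) := Iff.rfl
    set s₁ := msDot S₁ (commonNbhd G {u, v}) with hs₁
    set s₂ := msDot S₂ (commonNbhd G {u, v}) with hs₂
    have hkey : (s₁ + s₂ ≡ 2 ^ (r-1) [MOD 2 ^ r]) ↔
        ¬ ((s₁ ≡ 2 ^ (r-1) [MOD 2 ^ r]) ↔ (s₂ ≡ 2 ^ (r-1) [MOD 2 ^ r])) := by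
      by_cases hc1 : ∃ x ∈ ({u, v} : Finset V), 0 < S₁ x
      · obtain ⟨x, hx, hx1⟩ := hc1
        have hz : s₁ = 0 := aux_msdot_zero hx (fun w hw => hi₁ x w hx1 hw)
        rw [hz]
        have := aux_not_zero_modeq hr
        simp only [Nat.zero_add]
        tauto
      by_cases hc2 : ∃ x ∈ ({u, v} : Finset V), 0 < S₂ x
      · obtain ⟨x, hx, hx2⟩ := hc2
        have hz : s₂ = 0 := aux_msdot_zero hx (fun w hw => hi₂ x w hx2 hw)
        rw [hz]
        have := aux_not_zero_modeq hr
        simp only [Nat.add_zero]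
        tauto
      push_neg at hc1 hc2
      have hcard : ({u, v} : Finset V).card = 0 + 2 := by
        rw [Finset.card_pair hne]
      have hd1 : 2 ^ (r - 0 - kdelta 0) ∣ s₁ := by
        apply hr₁ 0 hr _ _ hcard
        intro x hx
        rw [hsupp]
        exact Nat.not_lt.mpr (hc1 x hx)
      have hd2 : 2 ^ (r - 0 - kdelta 0) ∣ s₂ := by
        apply hr₂ 0 hr _ _ hcard
        intro x hx
        rw [hsupp]
        exact Nat.not_lt.mpr (hc2 x hx)
      have hke : r - 0 - kdelta 0 = r - 1 := by simp [kdelta]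
      rw [hke] at hd1 hd2
      exact aux_key_mod hr hd1 hd2
    rw [hL, hR, hMid, hkey]
    exact aux_logic _ _ _ _ hne
end

section
/- Let G = (V, E) be a finite simple graph, r a positive integer, and S an r-incident independent multiset of vertices. Then |G ⋆^r S⟩ = U |G⟩, where U is the local unitary that acts on the qubit of each vertex w ∈ V by the single-qubit gate X(S(w)·π/2^r) · Z(−(π/2^r) · Σ_{u ∈ N_G(w)} S(u)). -/
open Classical Real Matrix

namespace RLC
set_option linter.unusedSectionVars false
open Finset
variable {V : Type} [Fintype V] [DecidableEq V]

def adj2 (G : SimpleGraph V) (K : Finset V) : Prop := ∃ u ∈ K, ∃ v ∈ K, G.Adj u v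

lemma adj2_pair {G : SimpleGraph V} {u v : V} : adj2 G {u, v} ↔ G.Adj u v := by
  constructor
  · rintro ⟨a, ha, b, hb, hab⟩
    simp only [Finset.mem_insert, Finset.mem_singleton] at ha hb
    rcases ha with rfl | rfl <;> rcases hb with rfl | rfl <;>
      first | exact hab | exact (hab.ne rfl).elim | exact hab.symm
  · intro h
    exact ⟨u, by simp, v, by simp, h⟩

lemma neg_one_pow_card_filter {α : Type} [DecidableEq α] (s : Finset α) (p : α → Prop)
    [DecidablePred p] :
    ((-1 : ℂ)) ^ (s.filter p).card = ∏ K ∈ s, (if p K then (-1 : ℂ) else 1) := by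
  rw [Finset.prod_ite, Finset.prod_const, Finset.prod_const, one_pow, mul_one]

lemma edgeCount_eq (G : SimpleGraph V) (A : Finset V) :
    edgeCount G A = ((Finset.powersetCard 2 A).filter (adj2 G)).card := by
  have key : (Finset.univ.filter (fun p : V × V => G.Adj p.1 p.2 ∧ p.1 ∈ A ∧ p.2 ∈ A)).card
      = 2 * ((Finset.powersetCard 2 A).filter (adj2 G)).card := by
    rw [Finset.card_eq_sum_card_fiberwise
      (f := fun p : V × V => ({p.1, p.2} : Finset V))
      (t := (Finset.powersetCard 2 A).filter (adj2 G))]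
    · rw [Finset.sum_congr rfl (g := fun _ => 2), Finset.sum_const, smul_eq_mul, mul_comm]
      intro K hK
      rw [Finset.mem_filter, Finset.mem_powersetCard] at hK
      obtain ⟨⟨hKA, hK2⟩, hadj⟩ := hK
      obtain ⟨u, v, huv, rfl⟩ := Finset.card_eq_two.1 hK2
      have hadj' : G.Adj u v := adj2_pair.1 hadj
      have : Finset.filter (fun p : V × V => ({p.1, p.2} : Finset V) = {u, v})
          (Finset.univ.filter (fun p : V × V => G.Adj p.1 p.2 ∧ p.1 ∈ A ∧ p.2 ∈ A))
          = {(u, v), (v, u)} := by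
        ext ⟨a, b⟩
        simp only [Finset.mem_filter, Finset.mem_univ, true_and, Finset.mem_insert,
          Finset.mem_singleton, Prod.mk.injEq, Prod.ext_iff]
        constructor
        · rintro ⟨⟨hab, _, _⟩, hset⟩
          have hane : a ≠ b := hab.ne
          have ha : a ∈ ({u, v} : Finset V) := by rw [← hset]; simp
          have hb : b ∈ ({u, v} : Finset V) := by rw [← hset]; simp
          simp only [Finset.mem_insert, Finset.mem_singleton] at ha hb
          rcases ha with rfl | rfl
          · rcases hb with rfl | rfl
            · exact absurd rfl hane
            · exact Or.inl ⟨rfl, rfl⟩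
          · rcases hb with rfl | rfl
            · exact Or.inr ⟨rfl, rfl⟩
            · exact absurd rfl hane
        · have huA : u ∈ A := hKA (by simp)
          have hvA : v ∈ A := hKA (by simp)
          rintro (⟨rfl, rfl⟩ | ⟨rfl, rfl⟩)
          · exact ⟨⟨hadj', huA, hvA⟩, rfl⟩
          · exact ⟨⟨hadj'.symm, hvA, huA⟩, Finset.pair_comm _ _⟩
      rw [this]
      rw [Finset.card_insert_of_notMem (by simp [Prod.ext_iff, huv]), Finset.card_singleton]
    · intro p hp
      rw [Finset.mem_coe, Finset.mem_filter] at hp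
      obtain ⟨-, hadj, h1, h2⟩ := hp
      rw [Finset.mem_coe, Finset.mem_filter, Finset.mem_powersetCard]
      refine ⟨⟨?_, ?_⟩, ?_⟩
      · intro z hz
        simp only [Finset.mem_insert, Finset.mem_singleton] at hz
        rcases hz with rfl | rfl <;> assumption
      · exact Finset.card_pair hadj.ne
      · exact adj2_pair.2 hadj
  rw [edgeCount, key, Nat.mul_div_cancel_left _ (by norm_num)]

end RLC

namespace RLC
set_option linter.unusedSectionVars false
open Finset
variable {V : Type} [Fintype V] [DecidableEq V]

lemma eC_union (G : SimpleGraph V) (A : Finset V) :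
    ∀ B : Finset V, Disjoint A B → (∀ u ∈ B, ∀ v ∈ B, ¬ G.Adj u v) →
    ((-1 : ℂ)) ^ ((Finset.powersetCard 2 (A ∪ B)).filter (adj2 G)).card
      = ((-1 : ℂ)) ^ ((Finset.powersetCard 2 A).filter (adj2 G)).card *
        ∏ w ∈ B, ((-1 : ℂ)) ^ ((A.filter (fun v => G.Adj w v)).card) := by
  intro B
  induction B using Finset.induction_on with
  | empty => simp
  | @insert w B hwB ih =>
    intro hAB hBind
    have hwA : w ∉ A := fun h =>
      (Finset.disjoint_left.1 hAB h (Finset.mem_insert_self w B))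
    have hwAB : w ∉ A ∪ B := by
      simp only [Finset.mem_union, not_or]
      exact ⟨hwA, hwB⟩
    have hstep : A ∪ insert w B = insert w (A ∪ B) := by
      ext z; simp only [Finset.mem_union, Finset.mem_insert]; tauto
    rw [hstep, Finset.powersetCard_succ_insert hwAB, Finset.filter_union,
      Finset.card_union_of_disjoint, Finset.filter_image, Finset.card_image_of_injOn]
    · -- compute the image part card
      have himg : ((Finset.powersetCard 1 (A ∪ B)).filter (fun K => adj2 G (insert w K))).card
          = ((A ∪ B).filter (fun v => G.Adj w v)).card := by
        rw [Finset.powersetCard_one, Finset.filter_map, Finset.card_map]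
        congr 1
        apply Finset.filter_congr
        intro v _
        show adj2 G (insert w {v}) ↔ G.Adj w v
        exact adj2_pair
      have hB0 : (B.filter (fun v => G.Adj w v)) = ∅ := by
        rw [Finset.filter_eq_empty_iff]
        intro v hv
        exact hBind w (Finset.mem_insert_self w B) v (Finset.mem_insert_of_mem hv)
      rw [himg, Finset.filter_union, Finset.card_union_of_disjoint, hB0,
        Finset.card_empty, add_zero]
      · rw [pow_add, ih (Finset.disjoint_of_subset_right (Finset.subset_insert w B) hAB)
          (fun u hu v hv => hBind u (Finset.mem_insert_of_mem hu) v (Finset.mem_insert_of_mem hv)),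
          Finset.prod_insert hwB]
        ring
      · exact Finset.disjoint_filter_filter (Finset.disjoint_of_subset_right (Finset.subset_insert w B) hAB)
    · intro K1 h1 K2 h2 he
      rw [Finset.mem_coe, Finset.mem_filter, Finset.mem_powersetCard] at h1 h2
      have e1 : K1 = (insert w K1).erase w :=
        (Finset.erase_insert (fun h => hwAB (h1.1.1 h))).symm
      have e2 : K2 = (insert w K2).erase w :=
        (Finset.erase_insert (fun h => hwAB (h2.1.1 h))).symm
      rw [e1, e2, he]
    · rw [Finset.disjoint_left]
      rintro K hK1 hK2
      rw [Finset.mem_filter, Finset.mem_powersetCard] at hK1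
      rw [Finset.mem_filter, Finset.mem_image] at hK2
      obtain ⟨⟨K', hK', rfl⟩, -⟩ := hK2
      exact hwAB (hK1.1.1 (Finset.mem_insert_self w K'))

end RLC

namespace RLC
set_option linter.unusedSectionVars false
open Finset
variable {V : Type} [Fintype V] [DecidableEq V]

def togP (G : SimpleGraph V) (r : ℕ) (S : V → ℕ) (K : Finset V) : Prop :=
  msDot S (commonNbhd G K) % 2 ^ r = 2 ^ (r - 1)

lemma msDot_supp_zero {G : SimpleGraph V} {S : V → ℕ} (hInd : MsIndep G S) {w v : V}
    (hw : 0 < S w) : msDot S (commonNbhd G {w, v}) = 0 := by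
  apply Finset.sum_eq_zero
  intro u hu
  rw [commonNbhd, Finset.mem_filter] at hu
  have hadj : G.Adj w u := hu.2 w (by simp)
  by_contra h
  exact hInd w u hw (Nat.pos_of_ne_zero h) hadj

lemma two_pow_pred_lt {r : ℕ} (hr : 0 < r) : 2 ^ (r - 1) < 2 ^ r :=
  Nat.pow_lt_pow_right one_lt_two (by omega)

lemma rlc_adj {G : SimpleGraph V} {r : ℕ} {S : V → ℕ} (hr : 0 < r) (u v : V) :
    (rLocalComp G r S).Adj u v ↔ u ≠ v ∧ (G.Adj u v ↔ ¬ togP G r S {u, v}) := by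
  show (u ≠ v ∧ ¬ (G.Adj u v ↔ msDot S (commonNbhd G {u, v}) ≡ 2 ^ (r-1) [MOD 2 ^ r])) ↔ _
  have hmod : (msDot S (commonNbhd G {u, v}) ≡ 2 ^ (r-1) [MOD 2 ^ r]) ↔ togP G r S {u, v} := by
    unfold Nat.ModEq togP
    rw [Nat.mod_eq_of_lt (two_pow_pred_lt hr)]
  rw [hmod]
  tauto

lemma rlc_adj_supp {G : SimpleGraph V} {r : ℕ} {S : V → ℕ} (hInd : MsIndep G S) (hr : 0 < r)
    {w : V} (hw : 0 < S w) (v : V) :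
    (rLocalComp G r S).Adj w v ↔ G.Adj w v := by
  rw [rlc_adj hr]
  have htog : ¬ togP G r S {w, v} := by
    unfold togP
    rw [msDot_supp_zero hInd hw]
    simp only [Nat.zero_mod]
    exact fun h => (pow_ne_zero (r - 1) (two_ne_zero)) h.symm
  constructor
  · rintro ⟨-, h⟩; exact h.2 htog
  · intro h; exact ⟨h.ne, iff_of_true h htog⟩

lemma graphState_eq {G : SimpleGraph V} (P : Finset V) (hP : ∀ u ∈ P, ∀ v ∈ P, ¬ G.Adj u v)
    (x : V → Bool) :
    graphState G x =
      ((-1 : ℂ)) ^ ((Finset.powersetCard 2 (Finset.univ.filter fun v => x v = true ∧ v ∉ P)).filter (adj2 G)).card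
      * (∏ w ∈ P, if x w = true then
          ((-1 : ℂ)) ^ (((Finset.univ.filter fun v => x v = true ∧ v ∉ P)).filter (fun v => G.Adj w v)).card
          else 1)
      / (Real.sqrt (2 ^ Fintype.card V) : ℂ) := by
  have hsplit : (Finset.univ.filter fun v => x v = true)
      = (Finset.univ.filter fun v => x v = true ∧ v ∉ P) ∪ (P.filter fun v => x v = true) := by
    ext z
    simp only [Finset.mem_filter, Finset.mem_union, Finset.mem_univ, true_and]
    by_cases hz : z ∈ P <;> tauto
  have hdisj : Disjoint (Finset.univ.filter fun v => x v = true ∧ v ∉ P)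
      (P.filter fun v => x v = true) := by
    rw [Finset.disjoint_left]
    intro a ha hb
    rw [Finset.mem_filter] at ha hb
    exact ha.2.2 hb.1
  rw [graphState, edgeCount_eq, hsplit,
    eC_union G _ _ hdisj (fun u hu v hv => hP u (Finset.mem_filter.1 hu).1 v (Finset.mem_filter.1 hv).1),
    Finset.prod_filter]

end RLC

namespace RLC
set_option linter.unusedSectionVars false
open Finset
variable {V : Type} [Fintype V] [DecidableEq V]

lemma sum_choose_eq (G : SimpleGraph V) (S : V → ℕ) (A : Finset V) (k : ℕ) :
    ∑ K ∈ Finset.powersetCard k A, msDot S (commonNbhd G K)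
      = ∑ w, S w * Nat.choose ((A.filter (fun v => G.Adj w v)).card) k := by
  have h1 : ∀ K : Finset V, msDot S (commonNbhd G K)
      = ∑ w, if (∀ u ∈ K, G.Adj u w) then S w else 0 := by
    intro K
    rw [msDot, commonNbhd, Finset.sum_filter]
  simp_rw [h1]
  rw [Finset.sum_comm]
  apply Finset.sum_congr rfl
  intro w _
  have hset : (Finset.powersetCard k A).filter (fun K => ∀ u ∈ K, G.Adj u w)
      = Finset.powersetCard k (A.filter (fun v => G.Adj w v)) := by
    ext K
    simp only [Finset.mem_filter, Finset.mem_powersetCard]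
    constructor
    · rintro ⟨⟨hKA, hcard⟩, hadj⟩
      refine ⟨fun z hz => Finset.mem_filter.2 ⟨hKA hz, (G.adj_comm z w).1 (hadj z hz)⟩, hcard⟩
    · rintro ⟨hsub, hcard⟩
      refine ⟨⟨fun z hz => (Finset.mem_filter.1 (hsub hz)).1, hcard⟩,
        fun u hu => (G.adj_comm w u).1 (Finset.mem_filter.1 (hsub hu)).2⟩
  rw [← Finset.sum_filter, hset, Finset.sum_const, Finset.card_powersetCard,
    smul_eq_mul, mul_comm]

lemma four_mul_half (n N : ℕ) (hn : n ≤ N) (hN : 1 ≤ N) :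
    (4 : ℤ) * (n / 2 : ℕ) = ∑ k ∈ Finset.Icc 2 N, (-2 : ℤ) ^ k * (n.choose k) := by
  have hbin : ((-2 : ℤ) + 1) ^ n = ∑ k ∈ Finset.range (n + 1), (-2 : ℤ) ^ k * (n.choose k) := by
    rw [add_pow]
    apply Finset.sum_congr rfl
    intro k _
    rw [one_pow, mul_one]
  have hext : ∑ k ∈ Finset.range (N + 1), (-2 : ℤ) ^ k * (n.choose k)
      = ∑ k ∈ Finset.range (n + 1), (-2 : ℤ) ^ k * (n.choose k) := by
    refine (Finset.sum_subset (Finset.range_subset_range.2 (by omega)) ?_).symm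
    intro k _ hk
    rw [Finset.mem_range, not_lt] at hk
    rw [Nat.choose_eq_zero_of_lt (by omega), Nat.cast_zero, mul_zero]
  have hsplit : ∑ k ∈ Finset.range (N + 1), (-2 : ℤ) ^ k * (n.choose k)
      = (-2 : ℤ) ^ 0 * (n.choose 0) + (-2 : ℤ) ^ 1 * (n.choose 1)
        + ∑ k ∈ Finset.Icc 2 N, (-2 : ℤ) ^ k * (n.choose k) := by
    have : Finset.range (N + 1) = insert 0 (insert 1 (Finset.Icc 2 N)) := by
      ext m
      simp only [Finset.mem_range, Finset.mem_insert, Finset.mem_Icc]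
      omega
    rw [this, Finset.sum_insert, Finset.sum_insert]
    · ring
    · simp only [Finset.mem_Icc]; omega
    · simp only [Finset.mem_insert, Finset.mem_Icc]; omega
  have hval : ((-2 : ℤ) + 1) ^ n = (-1) ^ n := by norm_num
  have hpow : ((-1 : ℤ)) ^ n = 1 - 2 * (n % 2) := by
    rcases Nat.even_or_odd n with he | ho
    · rw [he.neg_one_pow]
      obtain ⟨m, rfl⟩ := he
      push_cast
      omega
    · rw [ho.neg_one_pow]
      obtain ⟨m, rfl⟩ := ho
      push_cast
      omega
  have key : (1 : ℤ) - 2 * ((n : ℤ) % 2)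
      = (-2 : ℤ) ^ 0 * (n.choose 0) + (-2 : ℤ) ^ 1 * (n.choose 1)
        + ∑ k ∈ Finset.Icc 2 N, (-2 : ℤ) ^ k * (n.choose k) := by
    rw [← hsplit, hext, ← hbin, hval, hpow]
  simp only [pow_zero, pow_one, Nat.choose_zero_right, Nat.choose_one_right,
    Nat.cast_one, one_mul] at key
  have hdiv : (n : ℤ) = 2 * ((n / 2 : ℕ) : ℤ) + ((n % 2 : ℕ) : ℤ) := by
    exact_mod_cast (Nat.div_add_mod n 2).symm
  omega

lemma key_congr (G : SimpleGraph V) (r : ℕ) (hr : 0 < r) (S : V → ℕ)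
    (hInc : RIncident G r S) (A : Finset V) (hA : ∀ v ∈ A, v ∉ msSupp S) :
    ∃ q : ℤ, (∑ w, S w * ((A.filter (fun v => G.Adj w v)).card / 2) : ℕ)
      = 2 ^ (r - 1) * (((Finset.powersetCard 2 A).filter (togP G r S)).card : ℤ) + 2 ^ r * q := by
  set N := Fintype.card V + 2 with hN
  set T : ℕ := ((Finset.powersetCard 2 A).filter (togP G r S)).card with hT
  have hnb : ∀ w : V, (A.filter (fun v => G.Adj w v)).card ≤ N := fun w =>
    le_trans (Finset.card_le_card (Finset.filter_subset _ _))
      (le_trans (Finset.card_le_univ A) (by omega))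
  -- the Λ_k
  have h4 : (4 : ℤ) * (∑ w, S w * ((A.filter (fun v => G.Adj w v)).card / 2) : ℕ)
      = ∑ k ∈ Finset.Icc 2 N, (-2 : ℤ) ^ k *
          (∑ K ∈ Finset.powersetCard k A, msDot S (commonNbhd G K) : ℕ) := by
    rw [Nat.cast_sum, Finset.mul_sum]
    have hterm : ∀ w : V, (4 : ℤ) * ((S w * ((A.filter (fun v => G.Adj w v)).card / 2) : ℕ) : ℤ)
        = ∑ k ∈ Finset.Icc 2 N, (-2 : ℤ) ^ k
            * ((S w : ℤ) * (((A.filter (fun v => G.Adj w v)).card).choose k : ℤ)) := by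
      intro w
      rw [Nat.cast_mul, ← mul_assoc, mul_comm (4 : ℤ) (S w : ℤ), mul_assoc,
        four_mul_half _ N (hnb w) (by omega), Finset.mul_sum]
      exact Finset.sum_congr rfl fun k _ => by ring
    rw [Finset.sum_congr rfl fun w _ => hterm w, Finset.sum_comm]
    apply Finset.sum_congr rfl
    intro k _
    rw [sum_choose_eq G S A k, Nat.cast_sum, Finset.mul_sum]
    exact Finset.sum_congr rfl fun w _ => by rw [Nat.cast_mul]; try ring
  -- incidence for subsets of A
  have hIncA : ∀ k, k < r → ∀ K ∈ Finset.powersetCard (k + 2) A,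
      (2 : ℕ) ^ (r - k - kdelta k) ∣ msDot S (commonNbhd G K) := by
    intro k hk K hK
    rw [Finset.mem_powersetCard] at hK
    exact hInc k hk K (fun u hu => hA u (hK.1 hu)) hK.2
  -- k = 2 term
  have hdvd2 : (2 : ℤ) ^ r ∣ (∑ K ∈ Finset.powersetCard 2 A, msDot S (commonNbhd G K) : ℕ)
      - 2 ^ (r - 1) * (T : ℤ) := by
    have hTsum : (2 : ℤ) ^ (r - 1) * (T : ℤ)
        = ∑ K ∈ Finset.powersetCard 2 A, (if togP G r S K then (2 : ℤ) ^ (r - 1) else 0) := by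
      rw [← Finset.sum_filter, Finset.sum_const, hT, nsmul_eq_mul, mul_comm]
    rw [hTsum, Nat.cast_sum, ← Finset.sum_sub_distrib]
    apply Finset.dvd_sum
    intro K hK
    have hdvd : (2 : ℕ) ^ (r - 1) ∣ msDot S (commonNbhd G K) := by
      have := hIncA 0 hr K (by simpa using hK)
      simpa [kdelta] using this
    obtain ⟨m, hm⟩ := hdvd
    by_cases htog : togP G r S K
    · rw [if_pos htog]
      unfold togP at htog
      refine ⟨(msDot S (commonNbhd G K) / 2 ^ r : ℕ), ?_⟩
      have hdm : (msDot S (commonNbhd G K) : ℤ)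
          = ((2 ^ r : ℕ) : ℤ) * ((msDot S (commonNbhd G K) / 2 ^ r : ℕ) : ℤ)
            + ((msDot S (commonNbhd G K) % 2 ^ r : ℕ) : ℤ) := by
        exact_mod_cast (Nat.div_add_mod (msDot S (commonNbhd G K)) (2 ^ r)).symm
      rw [htog] at hdm
      push_cast at hdm ⊢
      linarith
    · rw [if_neg htog, sub_zero]
      unfold togP at htog
      have hmod : msDot S (commonNbhd G K) % 2 ^ r = 2 ^ (r - 1) * (m % 2) := by
        rw [hm]
        have h2r : (2 : ℕ) ^ r = 2 ^ (r - 1) * 2 := by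
          rw [← pow_succ]
          congr 1
          omega
        rw [h2r, Nat.mul_mod_mul_left]
      have hm2 : m % 2 = 0 := by
        rcases Nat.mod_two_eq_zero_or_one m with h | h
        · exact h
        · rw [h, mul_one] at hmod
          exact absurd hmod htog
      have : (2 : ℕ) ^ r ∣ msDot S (commonNbhd G K) := by
        obtain ⟨m', rfl⟩ := Nat.dvd_of_mod_eq_zero hm2
        refine ⟨m', ?_⟩
        rw [hm, show (2 : ℕ) ^ r = 2 ^ (r - 1) * 2 from by rw [← pow_succ]; congr 1; omega]
        ring
      exact_mod_cast Int.natCast_dvd_natCast.2 this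
  -- k ≥ 3 terms
  have hdvd3 : ∀ k ∈ Finset.Icc 3 N, (2 : ℤ) ^ (r + 2) ∣ (-2 : ℤ) ^ k *
      (∑ K ∈ Finset.powersetCard k A, msDot S (commonNbhd G K) : ℕ) := by
    intro k hk
    rw [Finset.mem_Icc] at hk
    have hneg : ((-2 : ℤ)) ^ k = (-1) ^ k * 2 ^ k := by
      rw [← neg_one_mul, mul_pow]
    by_cases hkr : k ≤ r + 1
    · have hkm2 : k - 2 < r := by omega
      have hdvdK : (2 : ℤ) ^ (r - (k - 2)) ∣
          (∑ K ∈ Finset.powersetCard k A, msDot S (commonNbhd G K) : ℕ) := by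
        rw [Nat.cast_sum]
        apply Finset.dvd_sum
        intro K hK
        have h := hIncA (k - 2) hkm2 K (by rwa [show k - 2 + 2 = k by omega])
        have : kdelta (k - 2) = 0 := by unfold kdelta; simp; omega
        rw [this, Nat.sub_zero] at h
        exact_mod_cast Int.natCast_dvd_natCast.2 h
      obtain ⟨c, hc⟩ := hdvdK
      refine ⟨(-1) ^ k * c, ?_⟩
      rw [hneg, hc]
      have hexp : (2 : ℤ) ^ (r + 2) = 2 ^ k * 2 ^ (r - (k - 2)) := by
        rw [← pow_add]
        congr 1
        omega
      rw [hexp]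
      ring
    · have : (2 : ℤ) ^ (r + 2) ∣ 2 ^ k := pow_dvd_pow 2 (by omega)
      obtain ⟨c, hc⟩ := this
      refine ⟨(-1) ^ k * c * (∑ K ∈ Finset.powersetCard k A, msDot S (commonNbhd G K) : ℕ), ?_⟩
      rw [hneg, hc]
      ring
  -- assemble
  have hIccsplit : Finset.Icc 2 N = insert 2 (Finset.Icc 3 N) := by
    ext m
    simp only [Finset.mem_Icc, Finset.mem_insert]
    omega
  have h2notin : (2 : ℕ) ∉ Finset.Icc 3 N := by simp
  rw [hIccsplit, Finset.sum_insert h2notin] at h4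
  have hrest : (2 : ℤ) ^ (r + 2) ∣ ∑ k ∈ Finset.Icc 3 N, (-2 : ℤ) ^ k *
      (∑ K ∈ Finset.powersetCard k A, msDot S (commonNbhd G K) : ℕ) :=
    Finset.dvd_sum hdvd3
  obtain ⟨c2, hc2⟩ := hdvd2
  obtain ⟨c3, hc3⟩ := hrest
  refine ⟨c2 + c3, ?_⟩
  have h1 : ((-2 : ℤ)) ^ 2 = 4 := by norm_num
  rw [h1] at h4
  have hexp2 : (2 : ℤ) ^ (r + 2) = 4 * 2 ^ r := by rw [pow_add]; ring
  rw [hexp2] at hc3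
  have hΛ2 : ((∑ K ∈ Finset.powersetCard 2 A, msDot S (commonNbhd G K) : ℕ) : ℤ)
      = 2 ^ (r - 1) * (T : ℤ) + 2 ^ r * c2 := by omega
  have h4' : (4 : ℤ) * (∑ w, S w * ((A.filter (fun v => G.Adj w v)).card / 2) : ℕ)
      = 4 * (2 ^ (r - 1) * (T : ℤ) + 2 ^ r * (c2 + c3)) := by
    rw [h4, hΛ2, hc3]
    ring
  have := mul_left_cancel₀ (by norm_num : (4 : ℤ) ≠ 0) h4'
  linarith [this]

end RLC

namespace RLC
set_option linter.unusedSectionVars false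
open Finset
variable {V : Type} [Fintype V] [DecidableEq V]

lemma XZ_apply (θ φ : ℝ) (a b : Bool) :
    (Xrot θ * Zrot φ) (boolIdx a) (boolIdx b)
      = (if a = b then (1 + Complex.exp (Complex.I * θ)) / 2
          else (1 - Complex.exp (Complex.I * θ)) / 2)
        * (if b then Complex.exp (Complex.I * φ) else 1) := by
  have h2 : ((Real.sqrt 2 : ℝ) : ℂ) * ((Real.sqrt 2 : ℝ) : ℂ) = 2 := by
    rw [← Complex.ofReal_mul, Real.mul_self_sqrt (by norm_num)]
    norm_num
  have h20 : ((Real.sqrt 2 : ℝ) : ℂ) ≠ 0 := by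
    intro h
    rw [h, mul_zero] at h2
    norm_num at h2
  cases a <;> cases b <;>
    · simp only [Xrot, Hgate, Zrot, boolIdx, if_true, if_false, Bool.false_eq_true]
      simp only [Matrix.mul_apply, Matrix.smul_apply, Fin.sum_univ_two, Matrix.cons_val_zero,
        Matrix.cons_val_one, Matrix.head_cons, Matrix.head_fin_const, smul_eq_mul,
        Matrix.cons_val', Matrix.empty_val', Matrix.cons_val_fin_one, reduceIte, Matrix.of_apply]
      have hsq : ((Real.sqrt 2 : ℝ) : ℂ) ^ 2 = 2 := by rw [sq]; exact h2
      field_simp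
      rw [hsq]
      first
      | ring1
      | (left; trivial)
      | (norm_num <;> ring1)

lemma sum_b_notP (φ : ℝ) (xw : Bool) :
    (Xrot 0 * Zrot φ) (boolIdx xw) (boolIdx false)
      + (Xrot 0 * Zrot φ) (boolIdx xw) (boolIdx true)
      = if xw then Complex.exp (Complex.I * φ) else 1 := by
  have h0 : Complex.exp (Complex.I * (0 : ℝ)) = 1 := by
    simp
  cases xw <;> simp [XZ_apply, h0] <;> ring

lemma XZ_zero_ne (φ : ℝ) (a b : Bool) (h : a ≠ b) :
    (Xrot 0 * Zrot φ) (boolIdx a) (boolIdx b) = 0 := by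
  rw [XZ_apply, if_neg h]
  simp

lemma sum_b_P (θ : ℝ) (n : ℕ) (xw : Bool) :
    (Xrot θ * Zrot 0) (boolIdx xw) (boolIdx false) * 1
      + (Xrot θ * Zrot 0) (boolIdx xw) (boolIdx true) * (-1 : ℂ) ^ n
      = (if xw then (-1 : ℂ) ^ n else 1)
        * (if Even n then 1 else Complex.exp (Complex.I * θ)) := by
  have h0 : Complex.exp (Complex.I * ((0 : ℝ) : ℂ)) = 1 := by simp
  rcases Nat.even_or_odd n with he | ho
  · rw [he.neg_one_pow, if_pos he]
    cases xw <;> simp [XZ_apply, h0] <;> ring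
  · rw [ho.neg_one_pow, if_neg (Nat.not_even_iff_odd.2 ho)]
    cases xw <;> simp [XZ_apply, h0] <;> ring

end RLC

namespace RLC
set_option linter.unusedSectionVars false
open Finset
variable {V : Type} [Fintype V] [DecidableEq V]

lemma double_count (G : SimpleGraph V) (S : V → ℕ) (A : Finset V) :
    ∑ v ∈ A, (∑ u ∈ Finset.univ.filter (fun u => G.Adj v u), S u)
      = ∑ u, S u * (A.filter (fun v => G.Adj u v)).card := by
  have h1 : ∀ v, (∑ u ∈ Finset.univ.filter (fun u => G.Adj v u), S u)
      = ∑ u, if G.Adj v u then S u else 0 := fun v => Finset.sum_filter _ _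
  rw [Finset.sum_congr rfl fun v _ => h1 v, Finset.sum_comm]
  apply Finset.sum_congr rfl
  intro u _
  rw [← Finset.sum_filter, Finset.sum_const, smul_eq_mul, mul_comm]
  exact congrArg (fun t => S u * t) (congrArg Finset.card (Finset.filter_congr fun v _ => G.adj_comm v u))

lemma parity_pairs (G : SimpleGraph V) (r : ℕ) (hr : 0 < r) (S : V → ℕ) (A : Finset V) :
    ((-1 : ℂ)) ^ ((Finset.powersetCard 2 A).filter (adj2 (rLocalComp G r S))).card
      = ((-1 : ℂ)) ^ ((Finset.powersetCard 2 A).filter (adj2 G)).card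
        * ((-1 : ℂ)) ^ ((Finset.powersetCard 2 A).filter (togP G r S)).card := by
  rw [neg_one_pow_card_filter, neg_one_pow_card_filter, neg_one_pow_card_filter,
    ← Finset.prod_mul_distrib]
  apply Finset.prod_congr rfl
  intro K hK
  rw [Finset.mem_powersetCard] at hK
  obtain ⟨u, v, huv, rfl⟩ := Finset.card_eq_two.1 hK.2
  have hG'adj : adj2 (rLocalComp G r S) {u, v} ↔ (G.Adj u v ↔ ¬ togP G r S {u, v}) := by
    rw [adj2_pair, rlc_adj hr]
    simp [huv]
  by_cases h1 : G.Adj u v <;> by_cases h2 : togP G r S {u, v} <;>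
    simp [adj2_pair, hG'adj, h1, h2]

lemma phase_eq (T Mtot : ℕ) (q : ℤ) (r : ℕ) (hr : 0 < r)
    (hM : (Mtot : ℤ) = 2 ^ (r - 1) * T + 2 ^ r * q) :
    Complex.exp (Complex.I * (((π / 2 ^ r) * (-2 * (Mtot : ℝ)) : ℝ) : ℂ)) = (-1 : ℂ) ^ T := by
  have hM' : (Mtot : ℝ) = 2 ^ (r - 1) * T + 2 ^ r * q := by exact_mod_cast hM
  have h2r : (2 : ℝ) ^ r = 2 ^ (r - 1) * 2 := by
    rw [← pow_succ]
    congr 1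
    omega
  have key : (π / 2 ^ r : ℝ) * (-2 * (Mtot : ℝ)) = -(π * T) - 2 * π * q := by
    rw [hM', h2r]
    have hne : (2 : ℝ) ^ (r - 1) ≠ 0 := by positivity
    field_simp
    ring
  rw [key]
  have harg : Complex.I * ((-(π * T) - 2 * π * q : ℝ) : ℂ)
      = (T : ℂ) * (π * Complex.I) + ((-(T : ℤ) - q : ℤ) : ℂ) * (2 * π * Complex.I) := by
    push_cast
    ring
  rw [harg, Complex.exp_add, Complex.exp_nat_mul, Complex.exp_pi_mul_I,
    Complex.exp_int_mul_two_pi_mul_I, mul_one]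

end RLC

open RLC

theorem stmt_5 {V : Type} [Fintype V] [DecidableEq V] (G : SimpleGraph V) (r : ℕ) (hr : 0 < r)
    (S : V → ℕ) (hS : MsIndep G S ∧ RIncident G r S) :
    graphState (rLocalComp G r S) =
      applyLocal (fun w =>
        Xrot ((S w : ℝ) * (π / 2 ^ r)) *
        Zrot (-(π / 2 ^ r) * ∑ u ∈ Finset.univ.filter (fun u => G.Adj w u), (S u : ℝ)))
        (graphState G) := by
  classical
  obtain ⟨hInd, hInc⟩ := hS
  funext x
  set P : Finset V := msSupp S with hPdef
  set A : Finset V := Finset.univ.filter (fun v => x v = true ∧ v ∉ P) with hAdef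
  have hmemP : ∀ w, w ∈ P ↔ 0 < S w := by
    intro w
    rw [hPdef, msSupp, Finset.mem_filter]
    simp
  have hS0 : ∀ w, w ∉ P → S w = 0 := by
    intro w hw
    by_contra h
    exact hw ((hmemP w).2 (Nat.pos_of_ne_zero h))
  have hPind : ∀ u ∈ P, ∀ v ∈ P, ¬ G.Adj u v := fun u hu v hv =>
    hInd u v ((hmemP u).1 hu) ((hmemP v).1 hv)
  have hadjP : ∀ w ∈ P, ∀ v, (rLocalComp G r S).Adj w v ↔ G.Adj w v := fun w hw v =>
    rlc_adj_supp hInd hr ((hmemP w).1 hw) v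
  have hPind' : ∀ u ∈ P, ∀ v ∈ P, ¬ (rLocalComp G r S).Adj u v := fun u hu v hv h =>
    hPind u hu v hv ((hadjP u hu v).1 h)
  have hAnotP : ∀ v ∈ A, v ∉ msSupp S := fun v hv => (Finset.mem_filter.1 hv).2.2
  have hφ0 : ∀ w ∈ P, ∑ u ∈ Finset.univ.filter (fun u => G.Adj w u), (S u : ℝ) = 0 := by
    intro w hw
    apply Finset.sum_eq_zero
    intro u hu
    rw [Finset.mem_filter] at hu
    have : S u = 0 := by
      by_contra h
      exact hInd w u ((hmemP w).1 hw) (Nat.pos_of_ne_zero h) hu.2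
    rw [this, Nat.cast_zero]
  set F : V → Bool → ℂ := fun w b =>
    (Xrot ((S w : ℝ) * (π / 2 ^ r)) *
      Zrot (-(π / 2 ^ r) * ∑ u ∈ Finset.univ.filter (fun u => G.Adj w u), (S u : ℝ)))
      (boolIdx (x w)) (boolIdx b) *
    (if w ∈ P then (if b then (-1 : ℂ) ^ ((A.filter (fun v => G.Adj w v)).card) else 1) else 1)
    with hFdef
  set C0 : ℂ := ((-1 : ℂ)) ^ ((Finset.powersetCard 2 A).filter (adj2 G)).card /
    (Real.sqrt (2 ^ Fintype.card V) : ℂ) with hC0def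
  rw [applyLocal]
  -- Step 1: pointwise rewriting of the summand
  have hEq1 : ∀ y : V → Bool,
      (∏ u, (Xrot ((S u : ℝ) * (π / 2 ^ r)) *
        Zrot (-(π / 2 ^ r) * ∑ v ∈ Finset.univ.filter (fun v => G.Adj u v), (S v : ℝ)))
        (boolIdx (x u)) (boolIdx (y u))) * graphState G y
      = C0 * ∏ w, F w (y w) := by
    intro y
    by_cases hy : ∀ w, w ∉ P → y w = x w
    · have hAy : (Finset.univ.filter fun v => y v = true ∧ v ∉ P) = A := by
        rw [hAdef]
        apply Finset.filter_congr
        intro v _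
        by_cases hv : v ∈ P
        · simp [hv]
        · rw [hy v hv]
      have hgs := graphState_eq P hPind y
      rw [hAy] at hgs
      rw [hgs]
      have hFy : ∏ w, F w (y w)
          = (∏ u, (Xrot ((S u : ℝ) * (π / 2 ^ r)) *
              Zrot (-(π / 2 ^ r) * ∑ v ∈ Finset.univ.filter (fun v => G.Adj u v), (S v : ℝ)))
              (boolIdx (x u)) (boolIdx (y u)))
            * ∏ w ∈ P, (if y w = true then
                (-1 : ℂ) ^ ((A.filter (fun v => G.Adj w v)).card) else 1) := by
        rw [hFdef]
        dsimp only
        rw [Finset.prod_mul_distrib, Finset.prod_ite_mem Finset.univ P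
          (fun w => if y w = true then (-1 : ℂ) ^ ((A.filter (fun v => G.Adj w v)).card) else 1),
          Finset.univ_inter]
      rw [hFy, hC0def]
      ring
    · push_neg at hy
      obtain ⟨w₀, hw₀P, hw₀⟩ := hy
      have hz : (Xrot ((S w₀ : ℝ) * (π / 2 ^ r)) *
          Zrot (-(π / 2 ^ r) * ∑ v ∈ Finset.univ.filter (fun v => G.Adj w₀ v), (S v : ℝ)))
          (boolIdx (x w₀)) (boolIdx (y w₀)) = 0 := by
        rw [hS0 w₀ hw₀P, Nat.cast_zero, zero_mul]
        exact XZ_zero_ne _ _ _ (fun h => hw₀ (by rw [h]))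
      rw [Finset.prod_eq_zero (Finset.mem_univ w₀) hz, zero_mul,
        Finset.prod_eq_zero (Finset.mem_univ w₀)
          (show F w₀ (y w₀) = 0 by rw [hFdef]; dsimp only; rw [hz, zero_mul]), mul_zero]
  rw [Finset.sum_congr rfl fun y _ => hEq1 y, ← Finset.mul_sum]
  -- Step 2: factorize the sum over y
  have hEq2 : ∑ y : V → Bool, ∏ w, F w (y w) = ∏ w, (F w false + F w true) := by
    rw [← Fintype.piFinset_univ, Finset.sum_prod_piFinset]
    apply Finset.prod_congr rfl
    intro w _
    rw [Fintype.sum_bool, add_comm]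
  rw [hEq2]
  -- Step 3: per-qubit values
  have hval : ∏ w, (F w false + F w true)
      = (∏ w ∈ Finset.univ.filter (· ∈ P),
          (if x w = true then (-1 : ℂ) ^ ((A.filter (fun v => G.Adj w v)).card) else 1)
          * (if Even ((A.filter (fun v => G.Adj w v)).card) then 1
              else Complex.exp (Complex.I * (((S w : ℝ) * (π / 2 ^ r) : ℝ) : ℂ))))
        * ∏ w ∈ Finset.univ.filter (¬ · ∈ P),
          (if x w = true then Complex.exp (Complex.I *
            ((-(π / 2 ^ r) * ∑ u ∈ Finset.univ.filter (fun u => G.Adj w u), (S u : ℝ) : ℝ) : ℂ))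
            else 1) := by
    rw [← Finset.prod_filter_mul_prod_filter_not Finset.univ (· ∈ P)]
    congr 1
    · apply Finset.prod_congr rfl
      intro w hw
      rw [Finset.mem_filter] at hw
      have hw' := hw.2
      rw [hFdef]
      dsimp only
      rw [if_pos hw', if_pos hw', hφ0 w hw', mul_zero]
      have := sum_b_P ((S w : ℝ) * (π / 2 ^ r)) ((A.filter (fun v => G.Adj w v)).card) (x w)
      rw [← this]
      simp only [Bool.false_eq_true, if_false, if_true]
    · apply Finset.prod_congr rfl
      intro w hw
      rw [Finset.mem_filter] at hw
      have hw' := hw.2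
      rw [hFdef]
      dsimp only
      rw [if_neg hw', if_neg hw', mul_one, mul_one, hS0 w hw', Nat.cast_zero, zero_mul]
      exact sum_b_notP _ (x w)
  rw [hval]
  -- Step 4: rewrite the target graph state
  have hgs' := graphState_eq (G := rLocalComp G r S) P hPind' x
  rw [← hAdef] at hgs'
  rw [hgs']
  have hnA' : ∏ w ∈ P, (if x w = true then
      (-1 : ℂ) ^ ((A.filter (fun v => (rLocalComp G r S).Adj w v)).card) else 1)
      = ∏ w ∈ P, (if x w = true then
      (-1 : ℂ) ^ ((A.filter (fun v => G.Adj w v)).card) else 1) := by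
    apply Finset.prod_congr rfl
    intro w hw
    rw [Finset.filter_congr fun v _ => (hadjP w hw v)]
  rw [hnA', parity_pairs G r hr S A]
  -- Step 5: the phase computation
  set T : ℕ := ((Finset.powersetCard 2 A).filter (togP G r S)).card with hTdef
  set Mtot : ℕ := ∑ w, S w * ((A.filter (fun v => G.Adj w v)).card / 2) with hMdef
  obtain ⟨q, hq⟩ := key_congr G r hr S hInc A hAnotP
  rw [← hMdef, ← hTdef] at hq
  have hphase : (∏ w ∈ Finset.univ.filter (· ∈ P),
        (if Even ((A.filter (fun v => G.Adj w v)).card) then 1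
          else Complex.exp (Complex.I * (((S w : ℝ) * (π / 2 ^ r) : ℝ) : ℂ))))
      * (∏ w ∈ Finset.univ.filter (¬ · ∈ P),
        (if x w = true then Complex.exp (Complex.I *
          ((-(π / 2 ^ r) * ∑ u ∈ Finset.univ.filter (fun u => G.Adj w u), (S u : ℝ) : ℝ) : ℂ))
          else 1))
      = (-1 : ℂ) ^ T := by
    have hp1 : ∀ w, (if Even ((A.filter (fun v => G.Adj w v)).card) then (1:ℂ)
        else Complex.exp (Complex.I * (((S w : ℝ) * (π / 2 ^ r) : ℝ) : ℂ)))
        = Complex.exp (Complex.I * (((if Even ((A.filter (fun v => G.Adj w v)).card) then 0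
            else (S w : ℝ) * (π / 2 ^ r)) : ℝ) : ℂ)) := by
      intro w
      by_cases h : Even ((A.filter (fun v => G.Adj w v)).card)
      · rw [if_pos h, if_pos h]
        simp
      · rw [if_neg h, if_neg h]
    have hp2 : ∀ w, (if x w = true then Complex.exp (Complex.I *
          ((-(π / 2 ^ r) * ∑ u ∈ Finset.univ.filter (fun u => G.Adj w u), (S u : ℝ) : ℝ) : ℂ))
          else 1)
        = Complex.exp (Complex.I * (((if x w = true then
            -(π / 2 ^ r) * ∑ u ∈ Finset.univ.filter (fun u => G.Adj w u), (S u : ℝ) else 0) : ℝ) : ℂ)) := by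
      intro w
      by_cases h : x w = true
      · rw [if_pos h, if_pos h]
      · rw [if_neg h, if_neg h]
        simp
    rw [Finset.prod_congr rfl fun w _ => hp1 w, Finset.prod_congr rfl fun w _ => hp2 w,
      ← Complex.exp_sum, ← Complex.exp_sum, ← Complex.exp_add]
    have hcol : ∀ (s : Finset V) (g : V → ℝ),
        ∑ w ∈ s, Complex.I * ((g w : ℝ) : ℂ) = Complex.I * (((∑ w ∈ s, g w : ℝ)) : ℂ) := by
      intro s g
      rw [← Finset.mul_sum]
      congr 1
      push_cast
      rfl
    rw [hcol, hcol, ← mul_add, ← Complex.ofReal_add]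
    -- real exponent computation
    have hE : (∑ w ∈ Finset.univ.filter (· ∈ P),
          (if Even ((A.filter (fun v => G.Adj w v)).card) then (0:ℝ)
            else (S w : ℝ) * (π / 2 ^ r)))
        + ∑ w ∈ Finset.univ.filter (¬ · ∈ P),
          (if x w = true then
            -(π / 2 ^ r) * ∑ u ∈ Finset.univ.filter (fun u => G.Adj w u), (S u : ℝ) else 0)
        = (π / 2 ^ r) * (-2 * (Mtot : ℝ)) := by
      have e1 : ∀ w, (if Even ((A.filter (fun v => G.Adj w v)).card) then (0:ℝ)
            else (S w : ℝ) * (π / 2 ^ r))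
          = (π / 2 ^ r) * (if Even ((A.filter (fun v => G.Adj w v)).card) then 0 else (S w : ℝ)) := by
        intro w
        by_cases h : Even ((A.filter (fun v => G.Adj w v)).card) <;> simp [h] <;> ring
      have e2 : ∀ w, (if x w = true then
            -(π / 2 ^ r) * ∑ u ∈ Finset.univ.filter (fun u => G.Adj w u), (S u : ℝ) else 0)
          = (π / 2 ^ r) * (-(if x w = true then
              ∑ u ∈ Finset.univ.filter (fun u => G.Adj w u), (S u : ℝ) else 0)) := by
        intro w
        by_cases h : x w = true <;> simp [h] <;> ring
      rw [Finset.sum_congr rfl fun w _ => e1 w, Finset.sum_congr rfl fun w _ => e2 w,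
        ← Finset.mul_sum, ← Finset.mul_sum, ← mul_add]
      congr 1
      -- now a real identity, reduce to ℤ
      have hW : ((∑ w ∈ Finset.univ.filter (· ∈ P),
            (if Even ((A.filter (fun v => G.Adj w v)).card) then (0:ℤ) else (S w : ℤ)))
          - ∑ w ∈ Finset.univ.filter (¬ · ∈ P),
            (if x w = true then (∑ u ∈ Finset.univ.filter (fun u => G.Adj w u), (S u : ℤ)) else 0))
          = -2 * (Mtot : ℤ) := by
        have hOdd : (∑ w ∈ Finset.univ.filter (· ∈ P),
              (if Even ((A.filter (fun v => G.Adj w v)).card) then (0:ℤ) else (S w : ℤ)))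
            = ∑ w, (if Even ((A.filter (fun v => G.Adj w v)).card) then (0:ℤ) else (S w : ℤ)) := by
          rw [← Finset.sum_filter_add_sum_filter_not Finset.univ (· ∈ P)
            (fun w => if Even ((A.filter (fun v => G.Adj w v)).card) then (0:ℤ) else (S w : ℤ))]
          have : ∑ w ∈ Finset.univ.filter (¬ · ∈ P),
              (if Even ((A.filter (fun v => G.Adj w v)).card) then (0:ℤ) else (S w : ℤ)) = 0 := by
            apply Finset.sum_eq_zero
            intro w hw
            rw [Finset.mem_filter] at hw
            rw [hS0 w hw.2]
            simp
          rw [this, add_zero]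
        have hXA : (∑ w ∈ Finset.univ.filter (¬ · ∈ P),
              (if x w = true then (∑ u ∈ Finset.univ.filter (fun u => G.Adj w u), (S u : ℤ)) else 0))
            = ∑ v ∈ A, (∑ u ∈ Finset.univ.filter (fun u => G.Adj v u), (S u : ℤ)) := by
          rw [← Finset.sum_filter, Finset.filter_filter]
          apply Finset.sum_congr _ (fun v _ => rfl)
          rw [hAdef]
          apply Finset.filter_congr
          intro v _
          tauto
        have hdc : (∑ v ∈ A, (∑ u ∈ Finset.univ.filter (fun u => G.Adj v u), (S u : ℤ)))
            = ∑ u, (S u : ℤ) * ((A.filter (fun v => G.Adj u v)).card : ℤ) := by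
          have := double_count G S A
          have hc := congrArg (fun t : ℕ => (t : ℤ)) this
          push_cast at hc
          exact hc
        rw [hOdd, hXA, hdc, hMdef, Nat.cast_sum, Finset.mul_sum, ← Finset.sum_sub_distrib]
        apply Finset.sum_congr rfl
        intro w _
        rw [Nat.cast_mul]
        by_cases h : Even ((A.filter (fun v => G.Adj w v)).card)
        · rw [if_pos h]
          have hc2 : (((A.filter (fun v => G.Adj w v)).card : ℕ) : ℤ)
              = 2 * (((A.filter (fun v => G.Adj w v)).card / 2 : ℕ) : ℤ) := by
            have := Nat.even_iff.1 h
            omega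
          rw [hc2]
          ring
        · rw [if_neg h]
          have hc2 : (((A.filter (fun v => G.Adj w v)).card : ℕ) : ℤ)
              = 2 * (((A.filter (fun v => G.Adj w v)).card / 2 : ℕ) : ℤ) + 1 := by
            have := Nat.odd_iff.1 (Nat.not_even_iff_odd.1 h)
            omega
          rw [hc2]
          ring
      -- deduce the real identity from the integer identity hW
      have hWr : ((∑ w ∈ Finset.univ.filter (· ∈ P),
            (if Even ((A.filter (fun v => G.Adj w v)).card) then (0:ℤ) else (S w : ℤ)) : ℤ) : ℝ)
          - ((∑ w ∈ Finset.univ.filter (¬ · ∈ P),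
            (if x w = true then (∑ u ∈ Finset.univ.filter (fun u => G.Adj w u), (S u : ℤ))
              else 0) : ℤ) : ℝ)
          = -2 * (Mtot : ℝ) := by
        rw [← Int.cast_sub, hW]
        push_cast
        ring
      rw [← hWr, sub_eq_add_neg, Int.cast_sum, Int.cast_sum]
      congr 1
      · apply Finset.sum_congr rfl
        intro w _
        by_cases h : Even ((A.filter (fun v => G.Adj w v)).card) <;> simp [h]
      · rw [← Finset.sum_neg_distrib]
        apply Finset.sum_congr rfl
        intro w _
        by_cases h : x w = true <;> simp [h]
    rw [hE]
    exact phase_eq T Mtot q r hr hq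
  -- final assembly
  have hfilterP : Finset.univ.filter (· ∈ P) = P := by
    rw [Finset.filter_mem_eq_inter, Finset.univ_inter]
  rw [hfilterP] at hphase
  rw [Finset.prod_mul_distrib, hfilterP, mul_assoc
    (∏ w ∈ P, (if x w = true then (-1 : ℂ) ^ ((A.filter (fun v => G.Adj w v)).card) else 1)),
    hphase, hC0def]
  ring
end
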